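/- Algebraic core of the equimultiplicity theorem: let n ≥ 1, let w : Fin n → ℕ with w i ≥ 1 for every i, let d ∈ ℕ, and let f₀ ∈ MvPolynomial (Fin n) ℂ be nonzero and weighted homogeneous of degree d with respect to w. Let i₀ be an index with w i₀ ≤ w i for all i, suppose w i₀ divides d, and set m := d / (w i₀). Let g₁, …, g_{j₀} ∈ MvPolynomial (Fin n) ℂ and for t ∈ ℂ set f_t := f₀ + ∑_{j=1}^{j₀} t^j • g_j. Assume there exists ε₀ > 0 such that for all t with ‖t‖ < ε₀ one has f_t + X_{i₀}^m ≠ 0 and ord₀(f_t + X_{i₀}^m) = ord₀(f₀ + X_{i₀}^m). Then there exists ε > 0 such that for all t with ‖t‖ < ε, f_t ≠ 0 and ord₀(f_t) = ord₀(f₀); that is, the family {f_t} is equimultiple at the origin. -/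

import Mathlib

/-- The order of a multivariate polynomial at the origin: the minimum total degree
of a monomial appearing in it (0 if the polynomial is 0, by convention `sInf ∅ = 0`). -/
noncomputable def ord0 {n : ℕ} (f : MvPolynomial (Fin n) ℂ) : ℕ :=
  sInf ((fun α : Fin n →₀ ℕ => ∑ i, α i) '' f.support)

open MvPolynomial

private lemma ord0_le {n : ℕ} {f : MvPolynomial (Fin n) ℂ} {α : Fin n →₀ ℕ}
    (h : α ∈ f.support) : ord0 f ≤ ∑ i, α i :=
  Nat.sInf_le ⟨α, h, rfl⟩

private lemma exists_ord0 {n : ℕ} {f : MvPolynomial (Fin n) ℂ} (hf : f ≠ 0) :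
    ∃ α ∈ f.support, (∑ i, α i) = ord0 f := by
  have hne : ((fun α : Fin n →₀ ℕ => ∑ i, α i) '' f.support).Nonempty := by
    obtain ⟨α, hα⟩ := (MvPolynomial.support_nonempty.mpr hf)
    exact ⟨_, ⟨α, hα, rfl⟩⟩
  obtain ⟨α, hα, hαe⟩ := Nat.sInf_mem hne
  exact ⟨α, hα, hαe⟩

theorem stmt10 (n : ℕ) (hn : 1 ≤ n) (w : Fin n → ℕ) (hw : ∀ i, 1 ≤ w i) (d : ℕ)
    (f₀ : MvPolynomial (Fin n) ℂ) (hf₀ : f₀ ≠ 0)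
    (hwh : MvPolynomial.IsWeightedHomogeneous w f₀ d)
    (i₀ : Fin n) (hi₀ : ∀ i, w i₀ ≤ w i) (hdvd : w i₀ ∣ d)
    (m : ℕ) (hm : m = d / w i₀)
    (j₀ : ℕ) (g : ℕ → MvPolynomial (Fin n) ℂ)
    (f : ℂ → MvPolynomial (Fin n) ℂ)
    (hf : ∀ t : ℂ, f t = f₀ + ∑ j ∈ Finset.Icc 1 j₀, (t ^ j) • g j)
    (ε₀ : ℝ) (hε₀ : 0 < ε₀)
    (hord : ∀ t : ℂ, ‖t‖ < ε₀ →
      f t + MvPolynomial.X i₀ ^ m ≠ 0 ∧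
      ord0 (f t + MvPolynomial.X i₀ ^ m) = ord0 (f₀ + MvPolynomial.X i₀ ^ m)) :
    ∃ ε > 0, ∀ t : ℂ, ‖t‖ < ε → f t ≠ 0 ∧ ord0 (f t) = ord0 f₀ := by
  have hw0 : 0 < w i₀ := hw i₀
  -- every monomial of f₀ has total degree ≤ m
  have hdegle : ∀ α ∈ f₀.support, (∑ i, α i) ≤ m := by
    intro α hα
    have hweight : (∑ i, α i * w i) = d := by
      have := hwh (MvPolynomial.mem_support_iff.mp hα)
      rw [Finsupp.weight_apply, Finsupp.sum_fintype] at this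
      · exact this
      · intro i; simp
    have h1 : (∑ i, α i) * w i₀ ≤ d := by
      rw [Finset.sum_mul]
      rw [← hweight]
      exact Finset.sum_le_sum fun i _ => Nat.mul_le_mul_left _ (hi₀ i)
    rw [hm]
    exact Nat.le_div_iff_mul_le hw0 |>.mpr h1
  -- pick a minimal-degree monomial of f₀
  obtain ⟨α₀, hα₀, hα₀deg⟩ := exists_ord0 hf₀
  have hordle : ord0 f₀ ≤ m := hα₀deg ▸ hdegle α₀ hα₀
  have hdegsingle : (∑ i, (Finsupp.single i₀ m) i) = m := by
    simp [Finsupp.single_apply]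
  have hf00 : f 0 = f₀ := by
    rw [hf 0]
    have : ∀ j ∈ Finset.Icc 1 j₀, ((0:ℂ) ^ j) • g j = 0 := by
      intro j hj
      have : j ≠ 0 := Nat.one_le_iff_ne_zero.mp (Finset.mem_Icc.mp hj).1
      rw [zero_pow this]; simp
    rw [Finset.sum_congr rfl this]; simp
  -- ord0 (f₀ + X^m) = ord0 f₀
  have hfg0 : f₀ + MvPolynomial.X i₀ ^ m ≠ 0 := by
    have := (hord 0 (by simpa using hε₀)).1
    rwa [hf00] at this
  have key : ord0 (f₀ + MvPolynomial.X i₀ ^ m) = ord0 f₀ := by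
    -- lower bound: every monomial of f₀ + X^m has degree ≥ ord0 f₀ (and ≤ m)
    have hub : ∀ γ ∈ (f₀ + MvPolynomial.X i₀ ^ m).support,
        ord0 f₀ ≤ (∑ i, γ i) ∧ (∑ i, γ i) ≤ m := by
      intro γ hγ
      have hc : MvPolynomial.coeff γ f₀ + MvPolynomial.coeff γ (MvPolynomial.X i₀ ^ m) ≠ 0 := by
        rw [← MvPolynomial.coeff_add]
        exact MvPolynomial.mem_support_iff.mp hγ
      by_cases h0 : MvPolynomial.coeff γ f₀ ≠ 0
      · have hγ' : γ ∈ f₀.support := MvPolynomial.mem_support_iff.mpr h0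
        exact ⟨ord0_le hγ', hdegle γ hγ'⟩
      · push_neg at h0
        rw [h0, zero_add, MvPolynomial.coeff_X_pow] at hc
        have : Finsupp.single i₀ m = γ := by
          by_contra h; simp [h] at hc
        subst this
        rw [hdegsingle]
        exact ⟨hordle, le_rfl⟩
    rcases lt_or_eq_of_le hordle with hlt | heq
    · -- α₀ survives in f₀ + X^m
      have : α₀ ∈ (f₀ + MvPolynomial.X i₀ ^ m).support := by
        rw [MvPolynomial.mem_support_iff, MvPolynomial.coeff_add, MvPolynomial.coeff_X_pow]
        have hne : ¬ Finsupp.single i₀ m = α₀ := by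
          intro he
          rw [← he] at hα₀deg
          rw [hdegsingle] at hα₀deg
          omega
        rw [if_neg hne, add_zero]
        exact MvPolynomial.mem_support_iff.mp hα₀
      have h1 : ord0 (f₀ + MvPolynomial.X i₀ ^ m) ≤ ord0 f₀ := by
        have := ord0_le this
        omega
      have h2 : ord0 f₀ ≤ ord0 (f₀ + MvPolynomial.X i₀ ^ m) := by
        obtain ⟨γ, hγ, hγe⟩ := exists_ord0 hfg0
        exact hγe ▸ (hub γ hγ).1
      omega
    · -- ord0 f₀ = m : all degrees in the sum's support are m
      obtain ⟨γ, hγ, hγe⟩ := exists_ord0 hfg0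
      have := hub γ hγ
      omega
  -- continuity: the coefficient of α₀ in f t is nonzero for small t
  set c₀ : ℂ := MvPolynomial.coeff α₀ f₀ with hc₀
  have hc₀ne : c₀ ≠ 0 := MvPolynomial.mem_support_iff.mp hα₀
  have hcoef : ∀ t : ℂ, MvPolynomial.coeff α₀ (f t)
      = c₀ + ∑ j ∈ Finset.Icc 1 j₀, t ^ j * MvPolynomial.coeff α₀ (g j) := by
    intro t
    rw [hf t, MvPolynomial.coeff_add, MvPolynomial.coeff_sum]
    simp [MvPolynomial.coeff_smul, smul_eq_mul, hc₀]
  have hcont : Continuous fun t : ℂ => c₀ + ∑ j ∈ Finset.Icc 1 j₀,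
      t ^ j * MvPolynomial.coeff α₀ (g j) := by
    exact continuous_const.add (continuous_finset_sum _ fun j _ =>
      (continuous_pow j).mul continuous_const)
  have h0val : (c₀ + ∑ j ∈ Finset.Icc 1 j₀,
      (0:ℂ) ^ j * MvPolynomial.coeff α₀ (g j)) = c₀ := by
    have : ∀ j ∈ Finset.Icc 1 j₀, (0:ℂ) ^ j * MvPolynomial.coeff α₀ (g j) = 0 := by
      intro j hj
      have : j ≠ 0 := Nat.one_le_iff_ne_zero.mp (Finset.mem_Icc.mp hj).1
      rw [zero_pow this]; ring
    rw [Finset.sum_congr rfl this]; simp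
  obtain ⟨δ, hδ0, hδ⟩ := Metric.continuousAt_iff.mp hcont.continuousAt (‖c₀‖)
    (by simpa using norm_pos_iff.mpr hc₀ne)
  refine ⟨min δ ε₀, lt_min hδ0 hε₀, fun t ht => ?_⟩
  have htδ : ‖t‖ < δ := lt_of_lt_of_le ht (min_le_left _ _)
  have htε₀ : ‖t‖ < ε₀ := lt_of_lt_of_le ht (min_le_right _ _)
  have hcne : MvPolynomial.coeff α₀ (f t) ≠ 0 := by
    rw [hcoef t]
    intro h
    have h2 := hδ (show dist t 0 < δ by simpa [dist_eq_norm] using htδ)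
    simp only [dist_eq_norm] at h2
    rw [h0val, h, zero_sub, norm_neg] at h2
    exact lt_irrefl _ h2
  have hmemt : α₀ ∈ (f t).support := MvPolynomial.mem_support_iff.mpr hcne
  have hftne : f t ≠ 0 := by
    intro h
    apply hcne
    rw [h]
    exact MvPolynomial.coeff_zero α₀
  refine ⟨hftne, ?_⟩
  have hle : ord0 (f t) ≤ ord0 f₀ := by
    have := ord0_le hmemt
    omega
  have hge : ord0 f₀ ≤ ord0 (f t) := by
    obtain ⟨γ, hγ, hγe⟩ := exists_ord0 hftne
    rw [← hγe]
    by_contra hlt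
    push_neg at hlt
    -- γ has degree < ord0 f₀ ≤ m, so it survives in f t + X^m
    have hγm : (∑ i, γ i) < m := lt_of_lt_of_le hlt hordle
    have hγmem : γ ∈ (f t + MvPolynomial.X i₀ ^ m).support := by
      rw [MvPolynomial.mem_support_iff, MvPolynomial.coeff_add, MvPolynomial.coeff_X_pow]
      have hne : ¬ Finsupp.single i₀ m = γ := by
        intro he; rw [← he, hdegsingle] at hγm; omega
      rw [if_neg hne, add_zero]
      exact MvPolynomial.mem_support_iff.mp hγ
    have := ord0_le hγmem
    rw [(hord t htε₀).2, key] at this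
    omega
  omega
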